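/- arXiv:1101.5375 — 3 statements merged into one kernel-verified Lean document; each statement's English description precedes it below -/
import Mathlib

section
/- Let f : ℝ^m → ℝ be analytic on a connected open domain D containing the origin, and let s ≥ 0 be an integer. If ∫₀¹ t^s f(tu) dt = c for a constant c, for all u in some open subset O ⊆ D containing the origin, then f(u) = (s+1)·c for all u ∈ D. -/
/-- Lemma 1, constant case: if `f : ℝ^m → ℝ` is analytic on a connected
open set `D` containing the origin and `∫₀¹ t^s f(tu) dt = c` for all `u` in an open
neighborhood `O ⊆ D` of the origin, then `f(u) = (s+1)c` for all `u ∈ D`. -/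
theorem stmt1 {m : ℕ} (f : (Fin m → ℝ) → ℝ) (D O : Set (Fin m → ℝ))
    (hD : IsOpen D) (hDconn : IsConnected D) (h0D : (0 : Fin m → ℝ) ∈ D)
    (hf : AnalyticOnNhd ℝ f D) (s : ℕ) (c : ℝ)
    (hO : IsOpen O) (h0O : (0 : Fin m → ℝ) ∈ O) (hOD : O ⊆ D)
    (hint : ∀ u ∈ O, (∫ t in (0:ℝ)..1, t ^ s * f (t • u)) = c) :
    ∀ u ∈ D, f u = (s + 1 : ℝ) * c := by
  obtain ⟨ε, hε, hball⟩ := Metric.isOpen_iff.mp hO 0 h0O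
  have hfc : ContinuousOn f D := hf.continuousOn
  -- key step: f((1/2)•u) = (s+1)c for all u in the ball
  have key : ∀ u ∈ Metric.ball (0 : Fin m → ℝ) ε,
      f ((1/2 : ℝ) • u) = (s + 1 : ℝ) * c := by
    intro u hu
    rw [Metric.mem_ball, dist_zero_right] at hu
    set g : ℝ → ℝ := fun y => y ^ s * f (y • u) with hg
    have hmem : ∀ t : ℝ, |t| ≤ 1 → t • u ∈ Metric.ball (0 : Fin m → ℝ) ε := by
      intro t ht
      rw [Metric.mem_ball, dist_zero_right, norm_smul]
      calc ‖t‖ * ‖u‖ ≤ 1 * ‖u‖ := by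
            apply mul_le_mul_of_nonneg_right _ (norm_nonneg u)
            simpa using ht
        _ < ε := by simpa using hu
    -- continuity of g on [-1, 1]
    have hgc : ContinuousOn g (Set.Icc (-1 : ℝ) 1) := by
      apply ContinuousOn.mul (by fun_prop)
      apply hfc.comp (by fun_prop)
      intro t ht
      exact hOD (hball (hmem t (abs_le.mpr ⟨ht.1, ht.2⟩)))
    -- Step A : the primitive equals c * r^(s+1) on (0,1]
    have stepA : ∀ r : ℝ, r ∈ Set.Ioc (0:ℝ) 1 →
        (∫ y in (0:ℝ)..r, g y) = c * r ^ (s + 1) := by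
      intro r hr
      have hr0 : (0:ℝ) < r := hr.1
      have hru : r • u ∈ O := by
        apply hball (hmem r _)
        rw [abs_of_pos hr0]; exact hr.2
      have h1 := hint (r • u) hru
      have h2 : (∫ t in (0:ℝ)..1, t ^ s * f (t • r • u))
          = ∫ t in (0:ℝ)..1, (r ^ s)⁻¹ * g (t * r) := by
        apply intervalIntegral.integral_congr
        intro t _
        show t ^ s * f (t • r • u) = (r ^ s)⁻¹ * g (t * r)
        rw [smul_smul, hg]
        simp only [mul_pow]
        field_simp
      rw [h2, intervalIntegral.integral_const_mul,
        intervalIntegral.integral_comp_mul_right g hr0.ne'] at h1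
      simp only [zero_mul, one_mul, smul_eq_mul] at h1
      have hrs : (r:ℝ) ^ s ≠ 0 := pow_ne_zero _ hr0.ne'
      field_simp at h1
      rw [h1, pow_succ]; ring
    -- Step B : FTC at r = 1/2
    have hInt : IntervalIntegrable g MeasureTheory.volume 0 (1/2 : ℝ) := by
      apply ContinuousOn.intervalIntegrable
      apply hgc.mono
      intro x hx
      rcases Set.mem_uIcc.mp hx with h | h
      · exact ⟨by linarith [h.1], by linarith [h.2]⟩
      · exact ⟨by linarith [h.1], by linarith [h.2]⟩
    have hcontAt : ContinuousAt g (1/2 : ℝ) := by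
      apply hgc.continuousAt
      exact Icc_mem_nhds (by norm_num) (by norm_num)
    have hmeas : StronglyMeasurableAtFilter g (nhds (1/2 : ℝ)) := by
      have : ContinuousOn g (Set.Ioo (-1:ℝ) 1) := hgc.mono Set.Ioo_subset_Icc_self
      exact this.stronglyMeasurableAtFilter isOpen_Ioo (1/2) (by norm_num)
    have hD1 : HasDerivAt (fun r => ∫ y in (0:ℝ)..r, g y) (g (1/2)) (1/2 : ℝ) :=
      intervalIntegral.integral_hasDerivAt_right hInt hmeas hcontAt
    have hD2 : HasDerivAt (fun r : ℝ => c * r ^ (s+1))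
        (c * ((s+1 : ℕ) * (1/2:ℝ) ^ s)) (1/2 : ℝ) := by
      simpa using (hasDerivAt_pow (s+1) (1/2 : ℝ)).const_mul c
    have hEq : (fun r => ∫ y in (0:ℝ)..r, g y) =ᶠ[nhds (1/2 : ℝ)]
        (fun r : ℝ => c * r ^ (s+1)) := by
      filter_upwards [Ioc_mem_nhds (show (0:ℝ) < 1/2 by norm_num)
        (show (1/2:ℝ) < 1 by norm_num)] with r hr
      exact stepA r hr
    have hD1' : HasDerivAt (fun r => ∫ y in (0:ℝ)..r, g y)
        (c * ((s+1 : ℕ) * (1/2:ℝ) ^ s)) (1/2 : ℝ) := hD2.congr_of_eventuallyEq hEq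
    have huniq := hD1.unique hD1'
    have h2s : ((1/2 : ℝ)) ^ s ≠ 0 := pow_ne_zero _ (by norm_num)
    rw [hg] at huniq
    simp only [Nat.cast_add, Nat.cast_one] at huniq
    field_simp at huniq
    rw [huniq]; ring
  -- eventually equal near 0
  have hev : f =ᶠ[nhds (0 : Fin m → ℝ)] (fun _ => (s + 1 : ℝ) * c) := by
    filter_upwards [Metric.ball_mem_nhds (0 : Fin m → ℝ) (half_pos hε)] with v hv
    have h2v : (2:ℝ) • v ∈ Metric.ball (0 : Fin m → ℝ) ε := by
      rw [Metric.mem_ball, dist_zero_right, norm_smul]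
      rw [Metric.mem_ball, dist_zero_right] at hv
      rw [Real.norm_ofNat]
      linarith
    have := key _ h2v
    rwa [smul_smul, show (1/2 : ℝ) * 2 = 1 by norm_num, one_smul] at this
  exact hf.eqOn_of_preconnected_of_eventuallyEq analyticOnNhd_const
    hDconn.isPreconnected h0D hev
end

section
/- Let f : ℝ^m → ℝ be analytic on a connected open domain D containing the origin, and s ≥ 0 an integer. If ∫₀¹ t^s f(tu) dt = 0 for all u in an open neighborhood of the origin contained in D, then f is identically zero on D. -/
/-- Lemma 1, zero case: if `f : ℝ^m → ℝ` is analytic on a connected open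
set `D` containing the origin and `∫₀¹ t^s f(tu) dt = 0` for all `u` in an open
neighborhood of the origin contained in `D`, then `f ≡ 0` on `D`. -/
theorem stmt2 {m : ℕ} (f : (Fin m → ℝ) → ℝ) (D O : Set (Fin m → ℝ))
    (hD : IsOpen D) (hDconn : IsConnected D) (h0D : (0 : Fin m → ℝ) ∈ D)
    (hf : AnalyticOnNhd ℝ f D) (s : ℕ)
    (hO : IsOpen O) (h0O : (0 : Fin m → ℝ) ∈ O) (hOD : O ⊆ D)
    (hint : ∀ u ∈ O, (∫ t in (0:ℝ)..1, t ^ s * f (t • u)) = 0) :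
    ∀ u ∈ D, f u = 0 := by
  obtain ⟨ε, hε, hball⟩ := Metric.isOpen_iff.1 hO 0 h0O
  -- Core claim: for `u` in the ball and `r ∈ (0,1)`, `f (r • u) = 0`.
  have key : ∀ u ∈ Metric.ball (0 : Fin m → ℝ) ε, ∀ r ∈ Set.Ioo (0:ℝ) 1, f (r • u) = 0 := by
    intro u hu r hr
    rw [mem_ball_zero_iff] at hu
    set g : ℝ → ℝ := fun τ => τ ^ s * f (τ • u) with hg
    have hIball : ∀ τ ∈ Set.Icc (0:ℝ) 1, τ • u ∈ Metric.ball (0 : Fin m → ℝ) ε := by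
      intro τ hτ
      rw [mem_ball_zero_iff, norm_smul]
      calc ‖τ‖ * ‖u‖ ≤ 1 * ‖u‖ := by
            apply mul_le_mul_of_nonneg_right _ (norm_nonneg u)
            rw [Real.norm_eq_abs, abs_le]; constructor <;> linarith [hτ.1, hτ.2]
        _ < ε := by rwa [one_mul]
    set U : Set ℝ := (fun τ : ℝ => τ • u) ⁻¹' D with hU
    have hUopen : IsOpen U := hD.preimage (continuous_id.smul continuous_const)
    have hIU : Set.Icc (0:ℝ) 1 ⊆ U := fun τ hτ => hOD (hball (hIball τ hτ))
    have gcontAt : ∀ τ ∈ U, ContinuousAt g τ := by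
      intro τ hτ
      have hc1 : ContinuousAt (fun τ : ℝ => τ • u) τ :=
        (continuous_id.smul continuous_const).continuousAt
      have hc2 : ContinuousAt f (τ • u) := (hf _ hτ).continuousAt
      have hc3 : ContinuousAt (f ∘ fun τ : ℝ => τ • u) τ := ContinuousAt.comp (x := τ) hc2 hc1
      exact (continuousAt_id.pow s).mul hc3
    have hmeas := ContinuousAt.stronglyMeasurableAtFilter (μ := MeasureTheory.volume)
      hUopen gcontAt
    -- The primitive vanishes on `(0,1]`.
    have hF0 : ∀ x ∈ Set.Ioc (0:ℝ) 1, (∫ τ in (0:ℝ)..x, g τ) = 0 := by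
      intro x hx
      have hxu : x • u ∈ O := hball (hIball x ⟨le_of_lt hx.1, hx.2⟩)
      have h1 := intervalIntegral.integral_comp_mul_left (a := (0:ℝ)) (b := 1) g (ne_of_gt hx.1)
      simp only [mul_zero, mul_one] at h1
      have h2 : (∫ t in (0:ℝ)..1, g (x * t))
          = x ^ s * ∫ t in (0:ℝ)..1, t ^ s * f (t • (x • u)) := by
        rw [← intervalIntegral.integral_const_mul]
        apply intervalIntegral.integral_congr
        intro t _
        have h3 : (x * t) • u = t • (x • u) := by rw [smul_smul, mul_comm]
        simp only [hg, h3, mul_pow]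
        ring
      rw [hint _ hxu, mul_zero] at h2
      have h3 : x⁻¹ • (∫ τ in (0:ℝ)..x, g τ) = 0 := h1.symm.trans h2
      rcases smul_eq_zero.mp h3 with h | h
      · exact absurd h (inv_ne_zero (ne_of_gt hx.1))
      · exact h
    -- FTC at r
    have hint01 : IntervalIntegrable g MeasureTheory.volume 0 r := by
      apply ContinuousOn.intervalIntegrable
      apply (continuousOn_of_forall_continuousAt gcontAt).mono
      intro τ hτ
      apply hIU
      have hsub : Set.uIcc (0:ℝ) r ⊆ Set.Icc 0 1 := by
        rw [Set.uIcc_of_le (le_of_lt hr.1)]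
        exact Set.Icc_subset_Icc le_rfl (le_of_lt hr.2)
      exact hsub hτ
    have hrU : r ∈ U := hIU ⟨le_of_lt hr.1, le_of_lt hr.2⟩
    have hder : HasDerivAt (fun x => ∫ τ in (0:ℝ)..x, g τ) (g r) r :=
      intervalIntegral.integral_hasDerivAt_right hint01 (hmeas r hrU) (gcontAt r hrU)
    have hev : (fun x => ∫ τ in (0:ℝ)..x, g τ) =ᶠ[nhds r] (fun _ => (0:ℝ)) := by
      filter_upwards [isOpen_Ioo.mem_nhds hr] with x hx
      exact hF0 x ⟨hx.1, le_of_lt hx.2⟩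
    have hder0 : HasDerivAt (fun _ : ℝ => (0:ℝ)) (g r) r :=
      hder.congr_of_eventuallyEq hev.symm
    have hgr : g r = 0 := hder0.unique (hasDerivAt_const r 0)
    have hrs : r ^ s ≠ 0 := pow_ne_zero s (ne_of_gt hr.1)
    have : r ^ s * f (r • u) = 0 := hgr
    rcases mul_eq_zero.mp this with h | h
    · exact absurd h hrs
    · exact h
  -- f vanishes on the ball
  have hball0 : ∀ w ∈ Metric.ball (0 : Fin m → ℝ) ε, f w = 0 := by
    intro w hw
    rw [mem_ball_zero_iff] at hw
    set r : ℝ := (‖w‖ + ε) / (2*ε) with hrdef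
    have hr0 : 0 < r := div_pos (by positivity) (by positivity)
    have hr1 : r < 1 := by rw [hrdef, div_lt_one (by positivity)]; linarith
    have hu : r⁻¹ • w ∈ Metric.ball (0 : Fin m → ℝ) ε := by
      rw [mem_ball_zero_iff, norm_smul, norm_inv, Real.norm_eq_abs, abs_of_pos hr0,
        inv_mul_lt_iff₀ hr0]
      have : r * ε = (‖w‖ + ε) / 2 := by rw [hrdef]; field_simp
      rw [this]
      linarith
    have := key _ hu r ⟨hr0, hr1⟩
    rwa [smul_inv_smul₀ (ne_of_gt hr0)] at this
  have hev0 : f =ᶠ[nhds (0 : Fin m → ℝ)] 0 := by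
    filter_upwards [Metric.ball_mem_nhds (0 : Fin m → ℝ) hε] with w hw using hball0 w hw
  intro u hu
  exact hf.eqOn_zero_of_preconnected_of_eventuallyEq_zero hDconn.isPreconnected h0D hev0 hu
end

section
/- Let F^μ_k : ℝ^m → ℝ (μ = 1,…,n; k = 1,…,m) be analytic on a ball B(0,R). Suppose there exist functions G^μ : B(0,R) → ℝ with ∫₀¹ F^μ_k(ty) dt = ∂G^μ/∂y^k on B(0,R) for all μ, k. Then there exist analytic functions G̃^μ on B(0,R) with F^μ_k(y) = ∂G̃^μ/∂y^k for all μ, k and all y ∈ B(0,R); explicitly, if G^μ = Σ_{l≥0} G^μ_l is the decomposition into homogeneous parts, then G̃^μ = Σ_{p≥0} (p+1) G^μ_{p+1} converges on B(0,R). -/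
open Metric Set MeasureTheory Filter ENNReal
open scoped Classical
set_option maxHeartbeats 1000000

noncomputable section

/-- Lift a continuous multilinear map on `E` to one on `C(K, E)`. -/
def mlift {E : Type*} [NormedAddCommGroup E] [NormedSpace ℝ E]
    {K : Type*} [TopologicalSpace K] [CompactSpace K] {n : ℕ}
    (p : ContinuousMultilinearMap ℝ (fun _ : Fin n => E) ℝ) :
    ContinuousMultilinearMap ℝ (fun _ : Fin n => C(K, E)) C(K, ℝ) :=
  MultilinearMap.mkContinuous
    { toFun := fun u => ⟨fun t => p (fun i => u i t),
        p.cont.comp (continuous_pi fun i => (u i).continuous)⟩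
      map_update_add' := by
        intro _ u j x y
        ext t
        have h1 : ∀ z : C(K,E), (fun i => (Function.update u j z) i t)
            = Function.update (fun i => u i t) j (z t) := by
          intro z
          funext i
          exact Function.apply_update (fun _ g => g t) u j z i
        simp [h1, ContinuousMultilinearMap.map_update_add]
      map_update_smul' := by
        intro _ u j c x
        ext t
        have h1 : ∀ z : C(K,E), (fun i => (Function.update u j z) i t)
            = Function.update (fun i => u i t) j (z t) := by
          intro z
          funext i
          exact Function.apply_update (fun _ g => g t) u j z i
        simp [h1, ContinuousMultilinearMap.map_update_smul] }
    ‖p‖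
    (by
      intro u
      refine (ContinuousMap.norm_le _ (by positivity)).2 fun t => ?_
      calc ‖p (fun i => u i t)‖ ≤ ‖p‖ * ∏ i, ‖u i t‖ := p.le_opNorm _
        _ ≤ ‖p‖ * ∏ i, ‖u i‖ := by
            refine mul_le_mul_of_nonneg_left ?_ (norm_nonneg p)
            exact Finset.prod_le_prod (fun i _ => norm_nonneg _)
              (fun i _ => (u i).norm_coe_le_norm t) )

theorem mlift_norm_le {E : Type*} [NormedAddCommGroup E] [NormedSpace ℝ E]
    {K : Type*} [TopologicalSpace K] [CompactSpace K] {n : ℕ}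
    (p : ContinuousMultilinearMap ℝ (fun _ : Fin n => E) ℝ) :
    ‖@mlift E _ _ K _ _ n p‖ ≤ ‖p‖ :=
  MultilinearMap.mkContinuous_norm_le _ (norm_nonneg p) _

theorem mlift_apply {E : Type*} [NormedAddCommGroup E] [NormedSpace ℝ E]
    {K : Type*} [TopologicalSpace K] [CompactSpace K] {n : ℕ}
    (p : ContinuousMultilinearMap ℝ (fun _ : Fin n => E) ℝ) (u : Fin n → C(K, E)) (t : K) :
    mlift p u t = p (fun i => u i t) := rfl

/-- The Nemytskii (composition) operator on continuous maps, with junk value `0` when the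
composition is not continuous. -/
def nem {E : Type*} [NormedAddCommGroup E] [NormedSpace ℝ E]
    {K : Type*} [TopologicalSpace K] [CompactSpace K] (F : E → ℝ) (u : C(K, E)) : C(K, ℝ) :=
  if hc : Continuous (fun t => F (u t)) then ⟨_, hc⟩ else 0

theorem nem_hasFPowerSeriesOnBall {E : Type*} [NormedAddCommGroup E] [NormedSpace ℝ E]
    {K : Type*} [TopologicalSpace K] [CompactSpace K] {F : E → ℝ}
    {p : FormalMultilinearSeries ℝ E ℝ} {z : E} {r : ℝ≥0∞}
    (h : HasFPowerSeriesOnBall F p z r) :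
    HasFPowerSeriesOnBall (nem (K := K) F) (fun n => mlift (p n))
      (ContinuousMap.const K z) r := by
  constructor
  · -- radius
    refine ENNReal.le_of_forall_nnreal_lt fun s hs => ?_
    have hs' : (s : ℝ≥0∞) < p.radius := lt_of_lt_of_le hs h.r_le
    obtain ⟨C, hC, hbound⟩ := p.norm_mul_pow_le_of_lt_radius hs'
    refine FormalMultilinearSeries.le_radius_of_bound _ C fun n => ?_
    calc ‖@mlift E _ _ K _ _ n (p n)‖ * (s:ℝ) ^ n ≤ ‖p n‖ * (s:ℝ) ^ n := by
          exact mul_le_mul_of_nonneg_right (mlift_norm_le _) (by positivity)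
      _ ≤ C := hbound n
  · exact h.r_pos
  · intro w hw
    rw [EMetric.mem_ball, edist_zero_right] at hw
    -- pointwise membership
    have hwt : ∀ t : K, z + w t ∈ Metric.eball z r := by
      intro t
      rw [EMetric.mem_ball, edist_eq_enorm_sub, add_sub_cancel_left]
      exact lt_of_le_of_lt (ENNReal.coe_le_coe.2 (by exact_mod_cast w.norm_coe_le_norm t)) hw
    have hcont : Continuous fun t : K => F ((ContinuousMap.const K z + w) t) := by
      refine h.continuousOn.comp_continuous (ContinuousMap.const K z + w).continuous fun t => ?_
      simpa using hwt t
    have hval : nem F (ContinuousMap.const K z + w)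
        = ⟨fun t => F (z + w t), by simpa using hcont⟩ := by
      rw [nem, dif_pos (by simpa using hcont)]
      ext t; simp; rfl
    -- summability
    obtain ⟨s, hws, hsr⟩ := ENNReal.lt_iff_exists_nnreal_btwn.1 hw
    have hws' : ‖w‖ ≤ (s : ℝ) := by
      have := hws.le
      exact_mod_cast this
    have hsum0 : Summable fun n => ‖p n‖ * (s:ℝ) ^ n :=
      p.summable_norm_mul_pow (lt_of_lt_of_le hsr h.r_le)
    have hsummable : Summable fun n => mlift (K := K) (p n) (fun _ => w) := by
      refine Summable.of_norm_bounded hsum0 fun n => ?_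
      refine le_trans ((mlift (p n)).le_opNorm fun _ => w) ?_
      simp only [Finset.prod_const, Finset.card_univ, Fintype.card_fin]
      exact mul_le_mul (mlift_norm_le _) (pow_le_pow_left₀ (norm_nonneg w) hws' n)
        (by positivity) (norm_nonneg _)
    have htsum := hsummable.hasSum
    have hlim : Tendsto (fun n => ∑ i ∈ Finset.range n, mlift (K := K) (p i) (fun _ => w))
        atTop (nhds (nem F (ContinuousMap.const K z + w))) := by
      obtain ⟨a, ha, C, hC, happrox⟩ := h.uniform_geometric_approx hsr
      have hwlt : ‖w‖ < (s : ℝ) := by exact_mod_cast hws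
      rw [tendsto_iff_norm_sub_tendsto_zero]
      refine squeeze_zero (g := fun n : ℕ => C * a ^ n) (fun n => norm_nonneg _) (fun n => ?_) ?_
      · refine (ContinuousMap.norm_le _ (mul_nonneg hC.le (pow_nonneg ha.1.le n))).2 fun t => ?_
        have hmem : w t ∈ ball (0 : E) (s : ℝ) := by
          rw [mem_ball_zero_iff]
          exact lt_of_le_of_lt (w.norm_coe_le_norm t) hwlt
        have := happrox (w t) hmem n
        have heval : ((∑ i ∈ Finset.range n, mlift (K := K) (p i) (fun _ => w))
            - nem F (ContinuousMap.const K z + w)) t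
            = p.partialSum n (w t) - F (z + w t) := by
          rw [hval]
          simp [FormalMultilinearSeries.partialSum, mlift_apply]
          rfl
        rw [heval, norm_sub_rev]
        exact this
      · have : Tendsto (fun n : ℕ => C * a ^ n) atTop (nhds (C * 0)) :=
          tendsto_const_nhds.mul (tendsto_pow_atTop_nhds_zero_of_lt_one ha.1.le ha.2)
        simpa using this
    have := htsum.tendsto_sum_nat
    have huniq := tendsto_nhds_unique this hlim
    rw [huniq] at htsum
    exact htsum

/-- Integration over `Icc c d` as a continuous linear functional on `C(Icc c d, ℝ)`. -/
def intCLM (c d : ℝ) (hcd : c ≤ d) : C(Icc c d, ℝ) →L[ℝ] ℝ :=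
  LinearMap.mkContinuous
    { toFun := fun u => ∫ t in c..d, u (projIcc c d hcd t)
      map_add' := by
        intro u v
        simp only [ContinuousMap.add_apply]
        exact intervalIntegral.integral_add
          ((u.continuous.comp continuous_projIcc).intervalIntegrable _ _)
          ((v.continuous.comp continuous_projIcc).intervalIntegrable _ _)
      map_smul' := by
        intro c' u
        simp only [ContinuousMap.coe_smul, Pi.smul_apply, RingHom.id_apply]
        exact intervalIntegral.integral_smul c' _ }
    (d - c)
    (by
      intro u
      simp only [LinearMap.coe_mk, AddHom.coe_mk]
      calc ‖∫ t in c..d, u (projIcc c d hcd t)‖ ≤ ‖u‖ * |d - c| :=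
            intervalIntegral.norm_integral_le_of_norm_le_const
              (fun x _ => u.norm_coe_le_norm _)
        _ = (d - c) * ‖u‖ := by rw [abs_of_nonneg (by linarith), mul_comm])

theorem intCLM_apply (c d : ℝ) (hcd : c ≤ d) (u : C(Icc c d, ℝ)) :
    intCLM c d hcd u = ∫ t in c..d, u (projIcc c d hcd t) := rfl

/-- Scaling map `x ↦ (t ↦ t • x)` as a continuous linear map into `C(Icc c d, E)`,
for `Icc c d ⊆ Icc 0 1`. -/
def sclCLM {E : Type*} [NormedAddCommGroup E] [NormedSpace ℝ E] (c d : ℝ)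
    (h0 : 0 ≤ c) (h1 : d ≤ 1) : E →L[ℝ] C(Icc c d, E) :=
  LinearMap.mkContinuous
    { toFun := fun x => ⟨fun t => (t : ℝ) • x, (continuous_subtype_val.smul continuous_const)⟩
      map_add' := by intro x y; ext t; simp
      map_smul' := by intro c' x; ext t; exact smul_comm _ _ _ }
    1
    (by
      intro x
      simp only [LinearMap.coe_mk, AddHom.coe_mk, one_mul]
      refine (ContinuousMap.norm_le _ (norm_nonneg x)).2 fun t => ?_
      show ‖(t : ℝ) • x‖ ≤ ‖x‖
      rw [norm_smul]
      have ht0 : 0 ≤ (t : ℝ) := le_trans h0 t.2.1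
      have ht1 : (t : ℝ) ≤ 1 := le_trans t.2.2 h1
      calc ‖(t:ℝ)‖ * ‖x‖ ≤ 1 * ‖x‖ := by
            refine mul_le_mul_of_nonneg_right ?_ (norm_nonneg x)
            rw [Real.norm_eq_abs, abs_of_nonneg ht0]; exact ht1
        _ = ‖x‖ := one_mul _)

theorem sclCLM_apply {E : Type*} [NormedAddCommGroup E] [NormedSpace ℝ E] (c d : ℝ)
    (h0 : 0 ≤ c) (h1 : d ≤ 1) (x : E) (t : Icc c d) :
    sclCLM c d h0 h1 x t = (t : ℝ) • x := rfl

theorem analyticAt_radial_integral {E : Type*} [NormedAddCommGroup E] [NormedSpace ℝ E]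
    {F : E → ℝ} {s : Set E} (hF : AnalyticOnNhd ℝ F s)
    {y₀ : E} (hy₀ : ∀ t : ℝ, t ∈ Icc (0:ℝ) 1 → t • y₀ ∈ s) :
    AnalyticAt ℝ (fun y => ∫ t in (0:ℝ)..1, F (t • y)) y₀ := by
  classical
  -- the compact segment
  set K' : Set E := (fun t : ℝ => t • y₀) '' Icc 0 1 with hK'
  have hK'c : IsCompact K' := isCompact_Icc.image (continuous_id.smul continuous_const)
  -- local power series with real radii
  have hchoice : ∀ z : K', ∃ p : FormalMultilinearSeries ℝ E ℝ, ∃ ε : ℝ,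
      0 < ε ∧ HasFPowerSeriesOnBall F p z (ENNReal.ofReal ε) := by
    rintro ⟨z, t, ht, rfl⟩
    obtain ⟨p, r, hr⟩ := hF _ (hy₀ t ht)
    rcases eq_or_ne r ⊤ with h | h
    · exact ⟨p, 1, one_pos, hr.mono (by simp) (by simp [h])⟩
    · exact ⟨p, r.toReal, ENNReal.toReal_pos hr.r_pos.ne' h,
        hr.mono (by simp [ENNReal.toReal_pos hr.r_pos.ne' h]) (by rw [ENNReal.ofReal_toReal h])⟩
  choose pz εz hεz hball using hchoice
  -- Lebesgue number for the cover by half-balls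
  obtain ⟨δ, hδ, hcov⟩ := lebesgue_number_lemma_of_metric hK'c
    (fun z : K' => isOpen_ball (x := (z : E)) (ε := εz z / 2))
    (fun z hz => mem_iUnion.2 ⟨⟨z, hz⟩, mem_ball_self (by linarith [hεz ⟨z, hz⟩])⟩)
  -- choose a fine partition
  obtain ⟨N0, hN0⟩ := exists_nat_gt (4 * ‖y₀‖ / δ)
  set N : ℕ := N0 + 1 with hN
  have hNpos : 0 < (N : ℝ) := by positivity
  have hNy : ‖y₀‖ / N < δ / 4 := by
    rw [div_lt_iff₀ hNpos]
    have h4 : 4 * ‖y₀‖ / δ < N := lt_of_lt_of_le hN0 (by exact_mod_cast Nat.le_succ N0)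
    rw [div_lt_iff₀ hδ] at h4
    nlinarith [norm_nonneg y₀]
  set η : ℝ := δ / 4 with hη
  have hηpos : 0 < η := by positivity
  set a : ℕ → ℝ := fun j => (j : ℝ) / N with ha
  have haMem : ∀ j : ℕ, j ≤ N → a j ∈ Icc (0:ℝ) 1 := by
    intro j hj
    constructor
    · positivity
    · rw [div_le_one hNpos]; exact_mod_cast hj
  -- choose cover elements for each piece
  have hcover : ∀ j : ℕ, j < N → ∃ zc : K', ball (a j • y₀) δ ⊆ ball (zc : E) (εz zc / 2) :=
    fun j hj => hcov _ ⟨a j, haMem j hj.le, rfl⟩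
  choose zc hzc using hcover
  -- key membership estimate
  have key : ∀ j : ℕ, (hj : j < N) → ∀ x ∈ ball y₀ η, ∀ t ∈ Icc (a j) (a (j+1)),
      t • x ∈ ball ((zc j hj : K') : E) (εz (zc j hj) / 2) := by
    intro j hj x hx t ht
    refine hzc j hj ?_
    rw [mem_ball, dist_eq_norm]
    have hdecomp : t • x - a j • y₀ = t • (x - y₀) + (t - a j) • y₀ := by
      rw [smul_sub, sub_smul]; abel
    have ht0 : 0 ≤ t := le_trans (haMem j hj.le).1 ht.1
    have ht1 : t ≤ 1 := le_trans ht.2 (haMem (j+1) hj).2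
    have htt : t - a j ≤ 1 / N := by
      have : a (j+1) - a j = 1 / N := by
        rw [ha]; push_cast; ring
      linarith [ht.2]
    have hxy : ‖x - y₀‖ < η := by rwa [mem_ball, dist_eq_norm] at hx
    calc ‖t • x - a j • y₀‖ ≤ ‖t • (x - y₀)‖ + ‖(t - a j) • y₀‖ := by
          rw [hdecomp]; exact norm_add_le _ _
      _ ≤ ‖x - y₀‖ + (1 / N) * ‖y₀‖ := by
          rw [norm_smul, norm_smul, Real.norm_eq_abs, Real.norm_eq_abs,
            abs_of_nonneg ht0, abs_of_nonneg (by linarith [ht.1])]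
          have h1 : t * ‖x - y₀‖ ≤ 1 * ‖x - y₀‖ :=
            mul_le_mul_of_nonneg_right ht1 (norm_nonneg _)
          have h2 : (t - a j) * ‖y₀‖ ≤ (1 / N) * ‖y₀‖ :=
            mul_le_mul_of_nonneg_right htt (norm_nonneg _)
          linarith
      _ < δ := by
          have : (1 / N) * ‖y₀‖ = ‖y₀‖ / N := by ring
          rw [this]
          linarith [hNy, hxy]
  have hmono : ∀ k : ℕ, a k ≤ a (k+1) := by
    intro k
    show (k : ℝ) / N ≤ ((k+1 : ℕ) : ℝ) / N
    gcongr
    exact_mod_cast Nat.le_succ k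
  -- each piece is analytic at y₀
  have hpiece : ∀ j : ℕ, (hj : j < N) → AnalyticAt ℝ
      (fun x => ∫ t in a j..a (j+1), F (t • x)) y₀ := by
    intro j hj
    have h0 : 0 ≤ a j := (haMem j hj.le).1
    have h1 : a (j+1) ≤ 1 := (haMem (j+1) hj).2
    have hcd : a j ≤ a (j+1) := hmono j
    set z : E := ((zc j hj : K') : E) with hzdef
    set ε : ℝ := εz (zc j hj) with hεdef
    have hε : 0 < ε := hεz _
    have hFp : HasFPowerSeriesOnBall F (pz (zc j hj)) z (ENNReal.ofReal ε) := hball _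
    have hnem := nem_hasFPowerSeriesOnBall (K := Icc (a j) (a (j+1))) hFp
    have hmem : sclCLM (a j) (a (j+1)) h0 h1 y₀ ∈
        Metric.eball (ContinuousMap.const (Icc (a j) (a (j+1))) z) (ENNReal.ofReal ε) := by
      rw [EMetric.mem_ball, edist_lt_ofReal, dist_eq_norm]
      have hle : ‖sclCLM (a j) (a (j+1)) h0 h1 y₀
          - ContinuousMap.const (Icc (a j) (a (j+1))) z‖ ≤ ε / 2 := by
        refine (ContinuousMap.norm_le _ (by linarith)).2 fun t => ?_
        have hk := key j hj y₀ (mem_ball_self hηpos) t t.2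
        rw [mem_ball, dist_eq_norm] at hk
        exact le_of_lt hk
      linarith
    have hnemA : AnalyticAt ℝ (nem (K := Icc (a j) (a (j+1))) F)
        (sclCLM (a j) (a (j+1)) h0 h1 y₀) := hnem.analyticAt_of_mem hmem
    have hcomp : AnalyticAt ℝ
        (fun x => intCLM (a j) (a (j+1)) hcd (nem F (sclCLM (a j) (a (j+1)) h0 h1 x))) y₀ :=
      ((intCLM (a j) (a (j+1)) hcd).analyticAt _).comp
        (hnemA.comp ((sclCLM (a j) (a (j+1)) h0 h1).analyticAt y₀))
    refine hcomp.congr ?_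
    refine Filter.eventuallyEq_of_mem (ball_mem_nhds y₀ hηpos) fun x hx => ?_
    have hmaps : ∀ t : Icc (a j) (a (j+1)), (t:ℝ) • x ∈ ball z (ε/2) :=
      fun t => key j hj x hx t t.2
    have hcont : Continuous fun t : Icc (a j) (a (j+1)) => F ((t:ℝ) • x) := by
      refine hFp.continuousOn.comp_continuous
        (continuous_subtype_val.smul continuous_const) fun t => ?_
      have hm := hmaps t
      rw [mem_ball, dist_eq_norm] at hm
      rw [EMetric.mem_ball, edist_lt_ofReal, dist_eq_norm]
      linarith
    have hcont' : Continuous fun t : Icc (a j) (a (j+1)) =>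
        F ((sclCLM (a j) (a (j+1)) h0 h1 x) t) := hcont
    have hnemval : nem F (sclCLM (a j) (a (j+1)) h0 h1 x)
        = ⟨fun t => F ((sclCLM (a j) (a (j+1)) h0 h1 x) t), hcont'⟩ := dif_pos hcont'
    show intCLM (a j) (a (j+1)) hcd (nem F (sclCLM (a j) (a (j+1)) h0 h1 x))
        = ∫ t in a j..a (j+1), F (t • x)
    rw [hnemval, intCLM_apply]
    refine intervalIntegral.integral_congr fun t ht => ?_
    rw [uIcc_of_le hcd] at ht
    rw [projIcc_of_mem hcd ht]
    rfl
  -- sum the pieces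
  have ha0 : a 0 = 0 := by simp [ha]
  have haN : a N = 1 := by rw [ha]; exact div_self hNpos.ne'
  have hsum : AnalyticAt ℝ
      (fun x => ∑ j ∈ Finset.range N, ∫ t in a j..a (j+1), F (t • x)) y₀ :=
    Finset.analyticAt_fun_sum _ (fun j hjm => hpiece j (Finset.mem_range.1 hjm))
  refine hsum.congr ?_
  refine Filter.eventuallyEq_of_mem (ball_mem_nhds y₀ hηpos) fun x hx => ?_
  have hint : ∀ k, k < N → IntervalIntegrable (fun t => F (t • x)) volume (a k) (a (k+1)) := by
    intro k hk
    refine ContinuousOn.intervalIntegrable ?_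
    rw [uIcc_of_le (hmono k)]
    have hFc : ContinuousOn F (ball ((zc k hk : K') : E) (εz (zc k hk) / 2)) := by
      refine (hball (zc k hk)).continuousOn.mono fun w hw => ?_
      rw [mem_ball, dist_eq_norm] at hw
      rw [EMetric.mem_ball, edist_lt_ofReal, dist_eq_norm]
      linarith [hεz (zc k hk)]
    exact hFc.comp (Continuous.continuousOn (continuous_id.smul continuous_const))
      fun t ht => key k hk x hx t ht
  have hadd := intervalIntegral.sum_integral_adjacent_intervals hint
  rw [ha0, haN] at hadd
  exact hadd


theorem radial_euler {E : Type*} [NormedAddCommGroup E] [NormedSpace ℝ E]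
    {F : E → ℝ} {R : ℝ} (hF : AnalyticOnNhd ℝ F (ball 0 R))
    {y : E} (hy : y ∈ ball 0 R)
    (hH : DifferentiableAt ℝ (fun v => ∫ t in (0:ℝ)..1, F (t • v)) y) :
    F y = (∫ t in (0:ℝ)..1, F (t • y))
      + fderiv ℝ (fun v => ∫ t in (0:ℝ)..1, F (t • v)) y y := by
  have hyR : ‖y‖ < R := mem_ball_zero_iff.1 hy
  have hR : 0 < R := lt_of_le_of_lt (norm_nonneg y) hyR
  set Hf : E → ℝ := fun v => ∫ t in (0:ℝ)..1, F (t • v) with hHf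
  set f0 : ℝ → ℝ := fun u => F (u • y) with hf0
  obtain ⟨ε, hεpos, hεR⟩ : ∃ ε : ℝ, 0 < ε ∧ (1 + ε) * ‖y‖ < R := by
    refine ⟨(R - ‖y‖) / (2 * (‖y‖ + 1)), div_pos (by linarith) (by positivity), ?_⟩
    rw [add_mul, one_mul]
    have hstep : (R - ‖y‖) / (2 * (‖y‖ + 1)) * ‖y‖ ≤ (R - ‖y‖) / 2 := by
      rw [div_mul_eq_mul_div, div_le_div_iff₀ (by positivity) (by norm_num)]
      nlinarith [norm_nonneg y, (by linarith : (0:ℝ) ≤ R - ‖y‖)]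
    linarith
  have key : ∀ u : ℝ, |u| < 1 + ε → u • y ∈ ball (0:E) R := by
    intro u hu
    rw [mem_ball_zero_iff, norm_smul, Real.norm_eq_abs]
    rcases eq_or_lt_of_le (norm_nonneg y) with h0 | h0
    · rw [← h0, mul_zero]; exact hR
    · have h1 : |u| * ‖y‖ < (1 + ε) * ‖y‖ := mul_lt_mul_of_pos_right hu h0
      linarith
  set I : Set ℝ := Ioo (-(1 + ε)) (1 + ε) with hI
  have hIopen : IsOpen I := isOpen_Ioo
  have h1I : (1:ℝ) ∈ I := by
    constructor <;> [linarith; linarith]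
  have hf0cont : ContinuousOn f0 I := by
    intro u hu
    have hFc := (hF _ (key u (by rw [abs_lt]; exact ⟨by linarith [hu.1], hu.2⟩))).continuousAt
    have hg : Continuous fun v : ℝ => v • y := continuous_id.smul continuous_const
    have : ContinuousAt (fun v : ℝ => F (v • y)) u := ContinuousAt.comp hFc hg.continuousAt
    exact this.continuousWithinAt
  -- FTC side
  have hQ : HasDerivAt (fun s : ℝ => ∫ u in (0:ℝ)..s, f0 u) (f0 1) 1 := by
    refine intervalIntegral.integral_hasDerivAt_right ?_ ?_ ?_
    · refine (hf0cont.mono ?_).intervalIntegrable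
      rw [uIcc_of_le (by norm_num : (0:ℝ) ≤ 1)]
      intro u hu
      exact ⟨by linarith [hu.1, hεpos], by linarith [hu.2, hεpos]⟩
    · exact hf0cont.stronglyMeasurableAtFilter hIopen 1 h1I
    · exact (hf0cont.continuousAt (hIopen.mem_nhds h1I))
  -- product side
  have hinner : HasDerivAt (fun s : ℝ => s • y) y 1 := by
    simpa using (hasDerivAt_id (1:ℝ)).smul_const y
  have hHf1 : HasFDerivAt Hf (fderiv ℝ Hf y) ((1:ℝ) • y) := by
    rw [one_smul]; exact hH.hasFDerivAt
  have hcomp : HasDerivAt (fun s : ℝ => Hf (s • y)) (fderiv ℝ Hf y y) 1 :=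
    HasFDerivAt.comp_hasDerivAt (f := fun s : ℝ => s • y) 1 hHf1 hinner
  have hP : HasDerivAt (fun s : ℝ => s * Hf (s • y)) (Hf y + fderiv ℝ Hf y y) 1 := by
    have := (hasDerivAt_id (1:ℝ)).mul hcomp
    simpa [one_smul, Pi.mul_def] using this
  -- the two functions agree near 1
  have hPQ : (fun s : ℝ => s * Hf (s • y)) =ᶠ[nhds 1] (fun s : ℝ => ∫ u in (0:ℝ)..s, f0 u) := by
    have hmem : Ioo (1/2 : ℝ) (1 + ε) ∈ nhds (1:ℝ) :=
      (isOpen_Ioo).mem_nhds ⟨by norm_num, by linarith⟩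
    refine Filter.eventuallyEq_of_mem hmem fun s hs => ?_
    have hs0 : s ≠ 0 := by have := hs.1; positivity
    have hcongr : Hf (s • y) = ∫ t in (0:ℝ)..1, f0 (s * t) := by
      rw [hHf]
      refine intervalIntegral.integral_congr fun t _ => ?_
      rw [hf0, smul_smul, mul_comm]
    have hsub := intervalIntegral.integral_comp_mul_left f0 hs0 (a := 0) (b := 1)
    rw [mul_zero, mul_one] at hsub
    show s * Hf (s • y) = _
    rw [hcongr, hsub, smul_eq_mul]
    field_simp
  have hP' : HasDerivAt (fun s : ℝ => s * Hf (s • y)) (f0 1) 1 :=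
    hQ.congr_of_eventuallyEq hPQ
  have hfin := hP.unique hP'
  have h2 : f0 1 = F y := by
    show F ((1:ℝ) • y) = F y
    rw [one_smul]
  rw [h2] at hfin
  exact hfin.symm

theorem pi_repr {m : ℕ} (v : Fin m → ℝ) : v = ∑ i, v i • (Pi.single i 1 : Fin m → ℝ) := by
  funext j
  rw [Finset.sum_apply]
  simp [Pi.single_apply]

theorem clm_ext_single {m : ℕ} {f g : (Fin m → ℝ) →L[ℝ] ℝ}
    (h : ∀ k, f (Pi.single k 1) = g (Pi.single k 1)) : f = g := by
  ext v
  conv_lhs => rw [pi_repr v]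
  conv_rhs => rw [pi_repr v]
  rw [map_sum, map_sum]
  refine Finset.sum_congr rfl fun i _ => ?_
  rw [_root_.map_smul, _root_.map_smul, h i]

/-- key step of Proposition 7, Godunov condition: if the analytic fluxes
`F^μ_k` on `B(0,R) ⊆ ℝ^m` admit potentials for their radial averages, i.e.
`∫₀¹ F^μ_k(ty) dt = ∂G^μ/∂y^k` on the ball, then there exist analytic functions `G̃^μ`
on `B(0,R)` with `F^μ_k = ∂G̃^μ/∂y^k` there (obtained by rescaling the homogeneous
components of `G^μ`, with the same radius of convergence). -/
theorem stmt13 {m n : ℕ} (R : ℝ) (hR : 0 < R)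
    (F : Fin n → Fin m → (Fin m → ℝ) → ℝ)
    (hF : ∀ μ k, AnalyticOnNhd ℝ (F μ k) (Metric.ball 0 R))
    (G : Fin n → (Fin m → ℝ) → ℝ)
    (hG : ∀ μ k, ∀ y ∈ Metric.ball (0 : Fin m → ℝ) R,
      (∫ t in (0:ℝ)..1, F μ k (t • y)) = fderiv ℝ (G μ) y (Pi.single k 1)) :
    ∃ Gt : Fin n → (Fin m → ℝ) → ℝ,
      (∀ μ, AnalyticOnNhd ℝ (Gt μ) (Metric.ball 0 R)) ∧
      ∀ μ k, ∀ y ∈ Metric.ball (0 : Fin m → ℝ) R,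
        F μ k y = fderiv ℝ (Gt μ) y (Pi.single k 1) := by
  classical
  set H : Fin n → Fin m → (Fin m → ℝ) → ℝ :=
    fun μ k y => ∫ t in (0:ℝ)..1, F μ k (t • y) with hHdef
  have hseg : ∀ y ∈ ball (0 : Fin m → ℝ) R, ∀ t : ℝ, t ∈ Icc (0:ℝ) 1 →
      t • y ∈ ball (0 : Fin m → ℝ) R := by
    intro y hy t ht
    rw [mem_ball_zero_iff] at hy ⊢
    rw [norm_smul, Real.norm_eq_abs, abs_of_nonneg ht.1]
    calc t * ‖y‖ ≤ 1 * ‖y‖ := mul_le_mul_of_nonneg_right ht.2 (norm_nonneg _)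
      _ < R := by rwa [one_mul]
  have hH : ∀ μ k, AnalyticOnNhd ℝ (H μ k) (ball 0 R) := fun μ k y hy =>
    analyticAt_radial_integral (hF μ k) (hseg y hy)
  set A : Fin n → (Fin m → ℝ) → ((Fin m → ℝ) →L[ℝ] ℝ) :=
    fun μ y => ∑ j, H μ j y • ContinuousLinearMap.proj j with hAdef
  have hAapply : ∀ μ y k, A μ y (Pi.single k 1) = H μ k y := by
    intro μ y k
    rw [hAdef]
    rw [ContinuousLinearMap.sum_apply]
    simp [ContinuousLinearMap.proj_apply, Pi.single_apply]
  have hAdiff : ∀ μ y, y ∈ ball (0 : Fin m → ℝ) R → DifferentiableAt ℝ (A μ) y := by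
    intro μ y hy
    exact DifferentiableAt.fun_sum fun j _ =>
      ((hH μ j y hy).differentiableAt).smul_const _
  have hGdiffU : ∀ μ y, y ∈ ball (0 : Fin m → ℝ) R → (∃ j, H μ j y ≠ 0) →
      HasFDerivAt (G μ) (A μ y) y := by
    intro μ y hy hex
    obtain ⟨j0, hj0⟩ := hex
    have hdiff : DifferentiableAt ℝ (G μ) y := by
      by_contra hnd
      have h0 : fderiv ℝ (G μ) y = 0 := fderiv_zero_of_not_differentiableAt hnd
      have hg := hG μ j0 y hy
      rw [h0] at hg
      exact hj0 (by simpa using hg)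
    have hfd : fderiv ℝ (G μ) y = A μ y := by
      refine clm_ext_single fun k => ?_
      rw [hAapply μ y k, ← hG μ k y hy]
    have := hdiff.hasFDerivAt
    rwa [hfd] at this
  have hUopen : ∀ μ, IsOpen {y | y ∈ ball (0 : Fin m → ℝ) R ∧ ∃ j, H μ j y ≠ 0} := by
    intro μ
    have hrw : {y | y ∈ ball (0 : Fin m → ℝ) R ∧ ∃ j, H μ j y ≠ 0}
        = ⋃ j, ball (0 : Fin m → ℝ) R ∩ (H μ j) ⁻¹' {x | x ≠ 0} := by
      ext y
      simp only [Set.mem_setOf_eq, Set.mem_iUnion, Set.mem_inter_iff, Set.mem_preimage]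
      exact ⟨fun ⟨h1, j, h2⟩ => ⟨j, h1, h2⟩, fun ⟨j, h1, h2⟩ => ⟨h1, j, h2⟩⟩
    rw [hrw]
    exact isOpen_iUnion fun j =>
      (hH μ j).continuousOn.isOpen_inter_preimage isOpen_ball isOpen_ne
  -- symmetry of mixed partials of H
  have hsym : ∀ μ y, y ∈ ball (0 : Fin m → ℝ) R → ∀ j k,
      fderiv ℝ (H μ j) y (Pi.single k 1) = fderiv ℝ (H μ k) y (Pi.single j 1) := by
    intro μ
    set U := {y | y ∈ ball (0 : Fin m → ℝ) R ∧ ∃ j, H μ j y ≠ 0} with hUdef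
    have hUb : U ⊆ ball 0 R := fun y hy => hy.1
    have hUsym : ∀ y ∈ U, ∀ j k,
        fderiv ℝ (H μ j) y (Pi.single k 1) = fderiv ℝ (H μ k) y (Pi.single j 1) := by
      intro y hyU j k
      have hy := hyU.1
      have hev : ∀ᶠ y' in nhds y, HasFDerivAt (G μ) (A μ y') y' :=
        Filter.eventually_of_mem ((hUopen μ).mem_nhds hyU) fun y' hy' =>
          hGdiffU μ y' hy'.1 hy'.2
      have hA' : HasFDerivAt (A μ) (fderiv ℝ (A μ) y) y := (hAdiff μ y hy).hasFDerivAt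
      have hsec := second_derivative_symmetric_of_eventually hev hA'
      have hder : ∀ jj kk : Fin m, fderiv ℝ (H μ jj) y (Pi.single kk 1)
          = fderiv ℝ (A μ) y (Pi.single kk 1) (Pi.single jj 1) := by
        intro jj kk
        have hHA : H μ jj = fun y' => A μ y' (Pi.single jj 1) := by
          funext y'; rw [hAapply]
        rw [hHA]
        have happ : HasFDerivAt (fun y' => A μ y' (Pi.single jj 1))
            ((ContinuousLinearMap.apply ℝ ℝ (Pi.single jj 1)).comp (fderiv ℝ (A μ) y)) y :=
          ((ContinuousLinearMap.apply ℝ ℝ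
            ((Pi.single jj 1 : Fin m → ℝ))).hasFDerivAt).comp y hA'
        rw [happ.fderiv]
        rfl
      rw [hder j k, hder k j]
      exact hsec _ _
    intro y hy j k
    by_cases hcl : y ∈ closure U
    · have hne : (nhdsWithin y U).NeBot := mem_closure_iff_nhdsWithin_neBot.1 hcl
      have hc : ∀ jj kk : Fin m, ContinuousWithinAt
          (fun y' => fderiv ℝ (H μ jj) y' (Pi.single kk 1)) U y := by
        intro jj kk
        have h1 : ContinuousOn (fun y' => fderiv ℝ (H μ jj) y') (ball 0 R) :=
          ((hH μ jj).fderiv).continuousOn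
        have h2 : ContinuousOn (fun y' => fderiv ℝ (H μ jj) y' (Pi.single kk 1))
            (ball 0 R) :=
          (ContinuousLinearMap.apply ℝ ℝ
            ((Pi.single kk 1 : Fin m → ℝ))).continuous.comp_continuousOn h1
        exact (h2 y hy).mono hUb
      have T1 := (hc j k).tendsto
      have T2' := (hc k j).tendsto
      have heq : (fun y' => fderiv ℝ (H μ j) y' (Pi.single k 1))
          =ᶠ[nhdsWithin y U] (fun y' => fderiv ℝ (H μ k) y' (Pi.single j 1)) :=
        Filter.eventually_of_mem self_mem_nhdsWithin fun y' hy' => hUsym y' hy' j k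
      have T2 : Filter.Tendsto (fun y' => fderiv ℝ (H μ j) y' (Pi.single k 1))
          (nhdsWithin y U) (nhds (fderiv ℝ (H μ k) y (Pi.single j 1))) :=
        (Filter.tendsto_congr' heq).2 T2'
      exact tendsto_nhds_unique T1 T2
    · have hV : (closure U)ᶜ ∩ ball (0 : Fin m → ℝ) R ∈ nhds y :=
        (isClosed_closure.isOpen_compl.inter isOpen_ball).mem_nhds ⟨hcl, hy⟩
      have hzero : ∀ jj : Fin m, H μ jj =ᶠ[nhds y] fun _ => (0:ℝ) := by
        intro jj
        refine Filter.eventually_of_mem hV fun y' hy' => ?_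
        by_contra hne0
        exact hy'.1 (subset_closure ⟨hy'.2, jj, hne0⟩)
      have hz : ∀ jj : Fin m, fderiv ℝ (H μ jj) y = 0 := by
        intro jj
        rw [(hzero jj).fderiv_eq]
        exact fderiv_const_apply 0
      rw [hz j, hz k]
      rfl
  -- the potential
  refine ⟨fun μ y => ∑ j, y j * H μ j y, ?_, ?_⟩
  · intro μ y hy
    refine Finset.analyticAt_fun_sum _ fun j _ => ?_
    exact ((ContinuousLinearMap.proj j :
      (Fin m → ℝ) →L[ℝ] ℝ).analyticAt y).mul (hH μ j y hy)
  · intro μ k y hy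
    have hterm : ∀ j : Fin m, HasFDerivAt (fun y' : Fin m → ℝ => y' j * H μ j y')
        (y j • fderiv ℝ (H μ j) y + (H μ j y) • (ContinuousLinearMap.proj j)) y := by
      intro j
      have h1 := (ContinuousLinearMap.proj (R := ℝ) (φ := fun _ : Fin m => ℝ)
        j).hasFDerivAt (x := y)
      have h2 : HasFDerivAt (H μ j) (fderiv ℝ (H μ j) y) y :=
        ((hH μ j) y hy).differentiableAt.hasFDerivAt
      exact h1.mul h2
    have hsumd : HasFDerivAt (fun y' : Fin m → ℝ => ∑ j, y' j * H μ j y')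
        (∑ j, (y j • fderiv ℝ (H μ j) y + (H μ j y) • ContinuousLinearMap.proj j)) y :=
      HasFDerivAt.fun_sum fun j _ => hterm j
    rw [hsumd.fderiv]
    rw [ContinuousLinearMap.sum_apply]
    simp only [ContinuousLinearMap.add_apply, ContinuousLinearMap.coe_smul',
      Pi.smul_apply, ContinuousLinearMap.proj_apply, smul_eq_mul]
    rw [Finset.sum_add_distrib]
    have hs2 : ∑ j, H μ j y * ((Pi.single k 1 : Fin m → ℝ) j) = H μ k y := by
      simp [Pi.single_apply]
    have hs1 : ∑ j, y j * fderiv ℝ (H μ j) y (Pi.single k 1)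
        = fderiv ℝ (H μ k) y y := by
      rw [Finset.sum_congr rfl fun j _ => by rw [hsym μ y hy j k]]
      have hyy : fderiv ℝ (H μ k) y (∑ i, y i • (Pi.single i 1 : Fin m → ℝ))
          = fderiv ℝ (H μ k) y y := by rw [← pi_repr y]
      rw [← hyy, map_sum]
      simp only [_root_.map_smul, smul_eq_mul]
    rw [hs1, hs2]
    have heuler := radial_euler (hF μ k) hy ((hH μ k y hy).differentiableAt)
    have hrw1 : H μ k y = ∫ t in (0:ℝ)..1, F μ k (t • y) := rfl
    have hrw2 : H μ k = fun v => ∫ t in (0:ℝ)..1, F μ k (t • v) := rfl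
    rw [← hrw1, ← hrw2] at heuler
    rw [heuler]
    ring

end
end
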